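/- Let n ≥ 3 and let f : R × R × O → [−1/n, 1/n] be a function that is neutral, sender invariant, receiver invariant, and such that there is a constant c ∈ ℝ with Σ_{a ∈ O} f(≻, ≻', a) = c for all preferences ≻, ≻' ∈ R. Then for every object a ∈ O and all preferences ≻, ≻', ≻'' ∈ R: rank(≻',a) = rank(≻'',a) implies f(≻, ≻', a) = f(≻, ≻'', a). -/

import Mathlib

open Finset

/-- A preference over `n` objects, encoded by its rank function:
`r a` is the (0-based) rank of object `a`; object `a` is strictly preferred to `b`
iff `r a < r b`.  The `k`-th ranked object (0-based) is `r.symm k`. -/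
abbrev Pref (n : ℕ) := Fin n ≃ Fin n

/-- The total probability that allocation `p` assigns to the upper contour set of `a`
(the objects weakly preferred to `a`) under preference `r`. -/
def upperSum {n : ℕ} (r : Pref n) (p : Fin n → ℝ) (a : Fin n) : ℝ :=
  ∑ o ∈ Finset.univ.filter (fun o => r o ≤ r a), p o

/-- First-order stochastic dominance of `p` over `q` with respect to preference `r`. -/
def StochDom {n : ℕ} (r : Pref n) (p q : Fin n → ℝ) : Prop :=
  ∀ a : Fin n, upperSum r q a ≤ upperSum r p a

/-- A random assignment: a doubly stochastic matrix. -/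
def IsRandomAssignment {n : ℕ} (P : Matrix (Fin n) (Fin n) ℝ) : Prop :=
  (∀ i a, 0 ≤ P i a) ∧ (∀ i, ∑ a, P i a = 1) ∧ (∀ a, ∑ i, P i a = 1)

/-- A mechanism maps every preference profile to a random assignment. -/
def IsMechanism {n : ℕ} (φ : (Fin n → Pref n) → Matrix (Fin n) (Fin n) ℝ) : Prop :=
  ∀ prof, IsRandomAssignment (φ prof)

/-- Strategy-proofness: no agent can ever benefit (in the stochastic dominance sense)
from misreporting her preference. -/
def StrategyProof {n : ℕ} (φ : (Fin n → Pref n) → Matrix (Fin n) (Fin n) ℝ) : Prop :=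
  ∀ (prof : Fin n → Pref n) (i : Fin n) (r' : Pref n),
    StochDom (prof i) (φ prof i) (φ (Function.update prof i r') i)

/-- Envy-freeness: each agent's allocation stochastically dominates every other
agent's allocation with respect to her own preference. -/
def EnvyFree {n : ℕ} (φ : (Fin n → Pref n) → Matrix (Fin n) (Fin n) ℝ) : Prop :=
  ∀ (prof : Fin n → Pref n) (i j : Fin n), StochDom (prof i) (φ prof i) (φ prof j)

/-- The transfer function takes values in `[-1/n, 1/n]`. -/
def TransferBounded {n : ℕ} (f : Pref n → Pref n → Fin n → ℝ) : Prop :=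
  ∀ r r' a, -(1 / (n : ℝ)) ≤ f r r' a ∧ f r r' a ≤ 1 / (n : ℝ)

/-- Relabeling of a preference by a permutation `π` of objects: the rank of `π a`
in `relabel π r` equals the rank of `a` in `r`. -/
def relabel {n : ℕ} (π : Equiv.Perm (Fin n)) (r : Pref n) : Pref n :=
  π.symm.trans r

/-- Neutrality of a mechanism: invariance under relabeling of the objects. -/
def Neutral {n : ℕ} (φ : (Fin n → Pref n) → Matrix (Fin n) (Fin n) ℝ) : Prop :=
  ∀ (prof : Fin n → Pref n) (π : Equiv.Perm (Fin n)) (i a : Fin n),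
    φ (fun j => relabel π (prof j)) i (π a) = φ prof i a

/-- Neutrality of a transfer function. -/
def NeutralTransfer {n : ℕ} (f : Pref n → Pref n → Fin n → ℝ) : Prop :=
  ∀ (r r' : Pref n) (a : Fin n) (π : Equiv.Perm (Fin n)),
    f r r' a = f (relabel π r) (relabel π r') (π a)

/-- Sender invariance of a transfer function. -/
def SenderInvariant {n : ℕ} (f : Pref n → Pref n → Fin n → ℝ) : Prop :=
  ∀ (r r' r'' : Pref n) (t : Fin n),
    ((∀ k, k ≤ t → r'.symm k = r''.symm k) →
      f r r' (r'.symm t) = f r r'' (r'.symm t)) ∧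
    ((∀ k, t ≤ k → r'.symm k = r''.symm k) →
      f r r' (r'.symm t) = f r r'' (r'.symm t))

/-- Receiver invariance of a transfer function. -/
def ReceiverInvariant {n : ℕ} (f : Pref n → Pref n → Fin n → ℝ) : Prop :=
  ∀ (r r' r'' : Pref n) (t : Fin n),
    ((∀ k, k ≤ t → r' (r.symm k) = r'' (r.symm k)) →
      f r r' (r.symm t) = f r r'' (r.symm t)) ∧
    ((∀ k, t ≤ k → r' (r.symm k) = r'' (r.symm k)) →
      f r r' (r.symm t) = f r r'' (r.symm t))

/-- A transfer function that is neutral, sender invariant, receiver invariant and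
has constant total transfer depends, for fixed receiver preference, only on the
rank of the object in the sender's preference. -/
-- count of Fin n elements below m
lemma card_lt_fin (n m : ℕ) (h : m ≤ n) :
    (univ.filter fun v : Fin n => (v : ℕ) < m).card = m := by
  rcases eq_or_lt_of_le h with rfl | hlt
  · rw [Finset.filter_true_of_mem (fun v _ => v.isLt)]
    simp
  · have : (univ.filter fun v : Fin n => (v : ℕ) < m) = Finset.Iio (⟨m, hlt⟩ : Fin n) := by
      ext v; simp [Fin.lt_def]
    rw [this, Fin.card_Iio]

/-- composite sender invariance -/
lemma compS {n : ℕ} (f : Pref n → Pref n → Fin n → ℝ) (hsend : SenderInvariant f)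
    (r r' r'' : Pref n) (a : Fin n) (h1 : r' a = r'' a)
    (h2 : ∀ y, r' y < r' a ↔ r'' y < r'' a) :
    f r r' a = f r r'' a := by
  set t := r' a with ht
  -- intermediate
  have key : ∀ k₁ k₂ : Fin n, k₁ ≤ t → ¬k₂ ≤ t → r'.symm k₁ = r''.symm k₂ → False := by
    intro k₁ k₂ hk1 hk2 he
    have h3 : r' (r''.symm k₂) = k₁ := by rw [← he]; simp
    have h4 : r'' (r''.symm k₂) = k₂ := by simp
    rcases lt_or_eq_of_le hk1 with hlt | heq
    · have := (h2 (r''.symm k₂)).mp (by rw [h3]; exact hlt)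
      rw [h4, ← h1] at this
      exact hk2 this.le
    · have hya : r''.symm k₂ = a := by
        apply r'.injective; rw [h3, heq, ht]
      rw [hya, ← h1] at h4
      exact hk2 h4.symm.le
  have hinj : Function.Injective (fun k : Fin n => if k ≤ t then r'.symm k else r''.symm k) := by
    intro k₁ k₂ he
    simp only at he
    by_cases hk1 : k₁ ≤ t <;> by_cases hk2 : k₂ ≤ t
    · rw [if_pos hk1, if_pos hk2] at he; exact r'.symm.injective he
    · rw [if_pos hk1, if_neg hk2] at he; exact absurd (key k₁ k₂ hk1 hk2 he) not_false
    · rw [if_neg hk1, if_pos hk2] at he; exact absurd (key k₂ k₁ hk2 hk1 he.symm) not_false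
    · rw [if_neg hk1, if_neg hk2] at he; exact r''.symm.injective he
  set e1 : Fin n ≃ Fin n := Equiv.ofBijective _ (Finite.injective_iff_bijective.mp hinj) with he1
  set r1 : Pref n := e1.symm with hr1
  have hr1symm : ∀ k, r1.symm k = if k ≤ t then r'.symm k else r''.symm k := by
    intro k; rw [hr1]; simp [he1, Equiv.ofBijective]
  have ha : r'.symm t = a := by rw [ht]; simp
  have step1 : f r r' a = f r r1 a := by
    have := (hsend r r' r1 t).1 (fun k hk => by rw [hr1symm k, if_pos hk])
    rwa [ha] at this
  have step2 : f r r1 a = f r r'' a := by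
    have har1 : r1.symm t = a := by rw [hr1symm, if_pos le_rfl, ha]
    have := (hsend r r1 r'' t).2 (fun k hk => by
      rw [hr1symm k]
      rcases eq_or_lt_of_le hk with heq | hlt
      · rw [if_pos heq.symm.le, ← heq, ha]
        apply r''.injective; rw [← h1, ht]; simp
      · rw [if_neg (not_le.mpr hlt)])
    rwa [har1] at this
  rw [step1, step2]

/-- composite receiver invariance -/
lemma compR {n : ℕ} (f : Pref n → Pref n → Fin n → ℝ) (hrecv : ReceiverInvariant f)
    (r r' r'' : Pref n) (a : Fin n) (h1 : r' a = r'' a)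
    (h2 : (univ.filter fun y => r y < r a).image r' = (univ.filter fun y => r y < r a).image r'') :
    f r r' a = f r r'' a := by
  set u := r a with hu
  have key : ∀ y₁ y₂ : Fin n, r y₁ ≤ u → ¬r y₂ ≤ u → r' y₁ = r'' y₂ → False := by
    intro y₁ y₂ hy1 hy2 he
    rcases lt_or_eq_of_le hy1 with hlt | heq
    · have hmem : r' y₁ ∈ (univ.filter fun y => r y < r a).image r' := by
        apply Finset.mem_image_of_mem; simp [hlt]; exact hlt
      rw [h2] at hmem
      obtain ⟨z, hz, hze⟩ := Finset.mem_image.mp hmem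
      simp only [Finset.mem_filter] at hz
      have : z = y₂ := r''.injective (by rw [hze, he])
      rw [this] at hz
      exact hy2 hz.2.le
    · have hya : y₁ = a := r.injective (heq.trans hu)
      rw [hya, h1] at he
      have : a = y₂ := r''.injective he
      rw [← this] at hy2
      exact hy2 le_rfl
  have hinj : Function.Injective (fun y : Fin n => if r y ≤ u then r' y else r'' y) := by
    intro y₁ y₂ he
    simp only at he
    by_cases hy1 : r y₁ ≤ u <;> by_cases hy2 : r y₂ ≤ u
    · rw [if_pos hy1, if_pos hy2] at he; exact r'.injective he
    · rw [if_pos hy1, if_neg hy2] at he; exact absurd (key y₁ y₂ hy1 hy2 he) not_false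
    · rw [if_neg hy1, if_pos hy2] at he; exact absurd (key y₂ y₁ hy2 hy1 he.symm) not_false
    · rw [if_neg hy1, if_neg hy2] at he; exact r''.injective he
  set r1 : Pref n := Equiv.ofBijective _ (Finite.injective_iff_bijective.mp hinj) with hr1
  have hr1app : ∀ y, r1 y = if r y ≤ u then r' y else r'' y := by
    intro y; rw [hr1]; simp [Equiv.ofBijective]
  have ha : r.symm u = a := by rw [hu]; simp
  have step1 : f r r' a = f r r1 a := by
    have := (hrecv r r' r1 u).1 (fun k hk => by
      rw [hr1app, if_pos (by simpa using hk)])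
    rwa [ha] at this
  have step2 : f r r1 a = f r r'' a := by
    have := (hrecv r r1 r'' u).2 (fun k hk => by
      rw [hr1app]
      rcases eq_or_lt_of_le hk with heq | hlt
      · rw [if_pos (by simp [← heq]), ← heq, ha, h1]
      · rw [if_neg (by simpa using not_le.mpr hlt)])
    rwa [ha] at this
  rw [step1, step2]

def mS {n : ℕ} (r g : Pref n) (a : Fin n) : ℕ :=
  (univ.filter fun y => r y < r a ∧ g y < g a).card

lemma split_card {n : ℕ} (p q : Fin n → Prop) [DecidablePred p] [DecidablePred q] :
    (univ.filter fun y => p y ∧ q y).card + (univ.filter fun y => p y ∧ ¬ q y).card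
      = (univ.filter fun y => p y).card := by
  rw [← Finset.filter_filter, ← Finset.filter_filter]
  exact Finset.card_filter_add_card_filter_not _

lemma cardS {n : ℕ} (g : Pref n) (v : Fin n) :
    (univ.filter fun y => g y < v).card = (v : ℕ) := by
  have : (univ.filter fun y : Fin n => g y < v).card
      = (univ.filter fun k : Fin n => k < v).card := by
    apply Finset.card_equiv g
    intro i; simp
  rw [this]
  have : (univ.filter fun k : Fin n => k < v) = Finset.Iio v := by ext k; simp
  rw [this, Fin.card_Iio]


lemma swap_step {n : ℕ} (f : Pref n → Pref n → Fin n → ℝ) (hrecv : ReceiverInvariant f)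
    (r r' r'' : Pref n) (a b c : Fin n)
    (hab : a ≠ b) (hac : a ≠ c)
    (hb' : r' b < r' a) (hc' : ¬ r' c < r' a)
    (hb'' : ¬ r'' b < r'' a) (hc'' : r'' c < r'' a)
    (hclass : (r b < r a ∧ r c < r a) ∨ (¬ r b < r a ∧ ¬ r c < r a)) :
    f r r' a = f r ((Equiv.swap b c).trans r') a ∧
    ((Equiv.swap b c).trans r') a = r' a ∧
    mS r ((Equiv.swap b c).trans r') a = mS r r' a ∧
    (univ.filter fun y =>
        ¬(((Equiv.swap b c).trans r') y < ((Equiv.swap b c).trans r') a ↔ r'' y < r'' a))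
      = ((univ.filter fun y => ¬(r' y < r' a ↔ r'' y < r'' a)).erase b).erase c := by
  have hbc : b ≠ c := by
    intro h; rw [h] at hb'; exact hc' hb'
  have hpres : ∀ y, (r y < r a ↔ r (Equiv.swap b c y) < r a) := by
    intro y
    by_cases hyb : y = b
    · subst hyb; rw [Equiv.swap_apply_left]; tauto
    · by_cases hyc : y = c
      · subst hyc; rw [Equiv.swap_apply_right]; tauto
      · rw [Equiv.swap_apply_of_ne_of_ne hyb hyc]
  have haa : (Equiv.swap b c) a = a := Equiv.swap_apply_of_ne_of_ne hab hac
  have h1a : ((Equiv.swap b c).trans r') a = r' a := by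
    simp only [Equiv.trans_apply, haa]
  refine ⟨?_, h1a, ?_, ?_⟩
  · -- compR application
    apply compR f hrecv r r' _ a h1a.symm
    ext z
    simp only [Finset.mem_image, Finset.mem_filter, Finset.mem_univ, true_and, Equiv.trans_apply]
    constructor
    · rintro ⟨y, hy, rfl⟩
      exact ⟨Equiv.swap b c y, (hpres y).mp hy, by rw [Equiv.swap_apply_self]⟩
    · rintro ⟨y, hy, rfl⟩
      exact ⟨Equiv.swap b c y, (hpres y).mp hy, rfl⟩
  · -- mS equality
    unfold mS
    apply Finset.card_equiv (Equiv.swap b c)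
    intro y
    simp only [Finset.mem_filter, Finset.mem_univ, true_and, Equiv.trans_apply, haa]
    rw [← hpres y]
  · -- D-set equality
    ext y
    simp only [Finset.mem_erase, Finset.mem_filter, Finset.mem_univ, true_and,
      Equiv.trans_apply, haa]
    by_cases hyb : y = b
    · subst hyb
      rw [Equiv.swap_apply_left]
      constructor
      · intro hcon; exact absurd (iff_of_false hc' hb'') hcon
      · rintro ⟨_, hb, _⟩; exact absurd rfl hb
    · by_cases hyc : y = c
      · subst hyc
        rw [Equiv.swap_apply_right]
        constructor
        · intro hcon; exact absurd (iff_of_true hb' hc'') hcon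
        · rintro ⟨hc, _, _⟩; exact absurd rfl hc
      · rw [Equiv.swap_apply_of_ne_of_ne hyb hyc]
        tauto

/-- Lemma M : for fixed `r` and `a`, `f r r' a` depends only on the rank `r' a`
and the count `mS r r' a`. -/
lemma lemM {n : ℕ} (f : Pref n → Pref n → Fin n → ℝ) (hsend : SenderInvariant f)
    (hrecv : ReceiverInvariant f) (r : Pref n) (a : Fin n) :
    ∀ (r' r'' : Pref n), r' a = r'' a → mS r r' a = mS r r'' a → f r r' a = f r r'' a := by
  suffices H : ∀ d (r' r'' : Pref n), r' a = r'' a → mS r r' a = mS r r'' a →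
      (univ.filter fun y => ¬(r' y < r' a ↔ r'' y < r'' a)).card = d →
      f r r' a = f r r'' a by
    intro r' r'' h1 h2
    exact H _ r' r'' h1 h2 rfl
  intro d
  induction d using Nat.strong_induction_on with
  | _ d IH =>
  intro r' r'' h1 h2 hD
  by_cases hd0 : (univ.filter fun y => ¬(r' y < r' a ↔ r'' y < r'' a)) = ∅
  · apply compS f hsend r r' r'' a h1
    intro y
    by_contra hy
    exact (Finset.eq_empty_iff_forall_notMem.mp hd0 y)
      (by simp only [Finset.mem_filter]; exact ⟨Finset.mem_univ y, hy⟩)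
  · obtain ⟨y₀, hy₀⟩ := Finset.nonempty_iff_ne_empty.mpr hd0
    simp only [Finset.mem_filter, Finset.mem_univ, true_and] at hy₀
    -- the class predicate : same side as y₀ w.r.t. r
    -- case on whether y₀ is in P or Q
    -- We produce b, c with the required sign pattern in the same class.
    have main : ∀ (C : Fin n → Prop) (_ : DecidablePred C), C y₀ →
        (univ.filter fun y => C y ∧ r' y < r' a).card
          = (univ.filter fun y => C y ∧ r'' y < r'' a).card →
        ∃ b c, C b ∧ C c ∧ (r' b < r' a) ∧ ¬(r'' b < r'' a) ∧
          ¬(r' c < r' a) ∧ (r'' c < r'' a) := by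
      intro C hdec hCy₀ hcard
      have split1 := split_card (fun y => C y ∧ r' y < r' a) (fun y => r'' y < r'' a)
      have split2 := split_card (fun y => C y ∧ r'' y < r'' a) (fun y => r' y < r' a)
      have hcomm : (univ.filter fun y => (C y ∧ r' y < r' a) ∧ r'' y < r'' a)
          = (univ.filter fun y => (C y ∧ r'' y < r'' a) ∧ r' y < r' a) := by
        apply Finset.filter_congr; intro y _; tauto
      have hD12 : (univ.filter fun y => (C y ∧ r' y < r' a) ∧ ¬(r'' y < r'' a)).card
          = (univ.filter fun y => (C y ∧ r'' y < r'' a) ∧ ¬(r' y < r' a)).card := by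
        rw [hcomm] at split1
        omega
      have hy₀mem : ((C y₀ ∧ r' y₀ < r' a) ∧ ¬(r'' y₀ < r'' a))
          ∨ ((C y₀ ∧ r'' y₀ < r'' a) ∧ ¬(r' y₀ < r' a)) := by tauto
      have hne1 : (univ.filter fun y => (C y ∧ r' y < r' a) ∧ ¬(r'' y < r'' a)).Nonempty := by
        rcases hy₀mem with h | h
        · exact ⟨y₀, by simp only [Finset.mem_filter, Finset.mem_univ, true_and]; exact h⟩
        · have : 0 < (univ.filter fun y => (C y ∧ r'' y < r'' a) ∧ ¬(r' y < r' a)).card :=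
            Finset.card_pos.mpr ⟨y₀, by simp only [Finset.mem_filter, Finset.mem_univ, true_and]; exact h⟩
          exact Finset.card_pos.mp (by omega)
      have hne2 : (univ.filter fun y => (C y ∧ r'' y < r'' a) ∧ ¬(r' y < r' a)).Nonempty := by
        have : 0 < (univ.filter fun y => (C y ∧ r' y < r' a) ∧ ¬(r'' y < r'' a)).card :=
          Finset.card_pos.mpr hne1
        exact Finset.card_pos.mp (by omega)
      obtain ⟨b, hb⟩ := hne1
      obtain ⟨c, hcm⟩ := hne2
      simp only [Finset.mem_filter, Finset.mem_univ, true_and] at hb hcm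
      exact ⟨b, c, hb.1.1, hcm.1.1, hb.1.2, hb.2, hcm.2, hcm.1.2⟩
    -- now case on the class of y₀
    have getbc : ∃ b c, ((r b < r a ∧ r c < r a) ∨ (¬ r b < r a ∧ ¬ r c < r a)) ∧
        (r' b < r' a) ∧ ¬(r'' b < r'' a) ∧ ¬(r' c < r' a) ∧ (r'' c < r'' a) := by
      by_cases hy₀P : r y₀ < r a
      · obtain ⟨b, c, hCb, hCc, h3, h4, h5, h6⟩ :=
          main (fun y => r y < r a) (by infer_instance) hy₀P (by unfold mS at h2; exact h2)
        exact ⟨b, c, Or.inl ⟨hCb, hCc⟩, h3, h4, h5, h6⟩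
      · have hcard : (univ.filter fun y => ¬(r y < r a) ∧ r' y < r' a).card
            = (univ.filter fun y => ¬(r y < r a) ∧ r'' y < r'' a).card := by
          have s1 := split_card (fun y => r' y < r' a) (fun y => r y < r a)
          have s2 := split_card (fun y => r'' y < r'' a) (fun y => r y < r a)
          have c1 : (univ.filter fun y : Fin n => r' y < r' a).card = ((r' a : Fin n) : ℕ) := cardS r' (r' a)
          have c2 : (univ.filter fun y : Fin n => r'' y < r'' a).card = ((r'' a : Fin n) : ℕ) := cardS r'' (r'' a)
          have hcm1 : (univ.filter fun y => r' y < r' a ∧ r y < r a)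
              = (univ.filter fun y => r y < r a ∧ r' y < r' a) := by
            apply Finset.filter_congr; intro y _; tauto
          have hcm2 : (univ.filter fun y => r'' y < r'' a ∧ r y < r a)
              = (univ.filter fun y => r y < r a ∧ r'' y < r'' a) := by
            apply Finset.filter_congr; intro y _; tauto
          have hcm3 : (univ.filter fun y => r' y < r' a ∧ ¬(r y < r a))
              = (univ.filter fun y => ¬(r y < r a) ∧ r' y < r' a) := by
            apply Finset.filter_congr; intro y _; tauto
          have hcm4 : (univ.filter fun y => r'' y < r'' a ∧ ¬(r y < r a))
              = (univ.filter fun y => ¬(r y < r a) ∧ r'' y < r'' a) := by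
            apply Finset.filter_congr; intro y _; tauto
          rw [hcm1, hcm3] at s1
          rw [hcm2, hcm4] at s2
          have hra : ((r' a : Fin n) : ℕ) = ((r'' a : Fin n) : ℕ) := by rw [h1]
          unfold mS at h2
          omega
        obtain ⟨b, c, hCb, hCc, h3, h4, h5, h6⟩ :=
          main (fun y => ¬(r y < r a)) (by infer_instance) hy₀P hcard
        exact ⟨b, c, Or.inr ⟨hCb, hCc⟩, h3, h4, h5, h6⟩
    obtain ⟨b, c, hclass, hb', hb'', hc', hc''⟩ := getbc
    have hab : a ≠ b := fun h => by rw [← h] at hb'; exact lt_irrefl _ hb'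
    have hac : a ≠ c := fun h => by rw [← h] at hc''; exact lt_irrefl _ hc''
    obtain ⟨e1, e2, e3, e4⟩ := swap_step f hrecv r r' r'' a b c hab hac hb' hc' hb'' hc'' hclass
    have hbD : b ∈ (univ.filter fun y => ¬(r' y < r' a ↔ r'' y < r'' a)) := by
      simp only [Finset.mem_filter, Finset.mem_univ, true_and]; tauto
    have hlt : ((univ.filter fun y =>
        ¬(((Equiv.swap b c).trans r') y < ((Equiv.swap b c).trans r') a ↔ r'' y < r'' a)).card) < d := by
      rw [e4, ← hD]
      calc (((univ.filter fun y => ¬(r' y < r' a ↔ r'' y < r'' a)).erase b).erase c).card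
          ≤ ((univ.filter fun y => ¬(r' y < r' a ↔ r'' y < r'' a)).erase b).card :=
            Finset.card_le_card (Finset.erase_subset _ _)
        _ < (univ.filter fun y => ¬(r' y < r' a ↔ r'' y < r'' a)).card :=
            Finset.card_erase_lt_of_mem hbD
    rw [e1]
    exact IH _ hlt ((Equiv.swap b c).trans r') r'' (e2.trans h1) (e3.trans h2) rfl

/-! ### Explicit permutation family -/

def wf (ρ β γ m : ℕ) : ℕ → ℕ := fun v =>
  if v < m then (if v < β then v else v + 1)
  else if v < ρ then γ + 1 + (v - m)
  else if v = ρ then β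
  else if v = ρ + 1 then γ
  else if v + m < ρ + 1 + γ then
    (if v - (ρ + 2) + m < β then v - (ρ + 2) + m else v - (ρ + 2) + m + 1)
  else v

section wfprops
variable {n ρ β γ m : ℕ} (hβγ : β < γ) (hmρ : m ≤ ρ) (hmγ : m < γ)
  (hρn : ρ + 1 < n) (hγρ : γ + ρ < n + m)

include hβγ hmρ hmγ hρn hγρ

lemma wf_lt : ∀ v, v < n → wf ρ β γ m v < n := by
  intro v hv; unfold wf; split_ifs <;> omega

lemma wf_surj : ∀ y, y < n → ∃ v, v < n ∧ wf ρ β γ m v = y := by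
  intro y hy
  by_cases hyβ : y = β
  · exact ⟨ρ, by omega, by unfold wf; split_ifs <;> omega⟩
  by_cases hyγ : y = γ
  · exact ⟨ρ + 1, by omega, by unfold wf; split_ifs <;> omega⟩
  by_cases hyβlt : y < β
  · by_cases hj : y < m
    · exact ⟨y, by omega, by unfold wf; split_ifs <;> omega⟩
    · exact ⟨y + ρ + 2 - m, by omega, by unfold wf; split_ifs <;> omega⟩
  by_cases hylt : y < γ
  · by_cases hj : y - 1 < m
    · exact ⟨y - 1, by omega, by unfold wf; split_ifs <;> omega⟩
    · exact ⟨y + ρ + 1 - m, by omega, by unfold wf; split_ifs <;> omega⟩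
  by_cases hy5 : y ≤ γ + ρ - m
  · exact ⟨y - γ - 1 + m, by omega, by unfold wf; split_ifs <;> omega⟩
  · exact ⟨y, by omega, by unfold wf; split_ifs <;> omega⟩

lemma wf_rho : wf ρ β γ m ρ = β := by unfold wf; split_ifs <;> omega

lemma wf_rho1 : wf ρ β γ m (ρ + 1) = γ := by unfold wf; split_ifs <;> omega

lemma wf_prefix_gamma : ∀ v, v < ρ → (wf ρ β γ m v < γ ↔ v < m) := by
  intro v hv; unfold wf; split_ifs <;> omega

lemma wf_prefix_beta (hmβ : m < β) : ∀ v, v < ρ → (wf ρ β γ m v < β ↔ v < m) := by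
  intro v hv; unfold wf; split_ifs <;> omega

lemma exists_wperm :
    ∃ w : Equiv.Perm (Fin n), ∀ v : Fin n, (w v : ℕ) = wf ρ β γ m (v : ℕ) := by
  have hlt := fun (v : Fin n) => wf_lt hβγ hmρ hmγ hρn hγρ (v : ℕ) v.isLt
  set g : Fin n → Fin n := fun v => ⟨wf ρ β γ m (v : ℕ), hlt v⟩ with hg
  have hsurj : Function.Surjective g := by
    intro y
    obtain ⟨v, hv, hwv⟩ := wf_surj hβγ hmρ hmγ hρn hγρ (y : ℕ) y.isLt
    exact ⟨⟨v, hv⟩, by rw [hg]; simp only; ext; simpa⟩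
  have hbij : Function.Bijective g := Finite.surjective_iff_bijective.mp hsurj
  exact ⟨Equiv.ofBijective g hbij, fun v => rfl⟩

end wfprops

/-- Swapping two `r`-adjacent objects in `r'` preserves the sum of the two transfers. -/
lemma lemSW {n : ℕ} (f : Pref n → Pref n → Fin n → ℝ) (hsend : SenderInvariant f)
    (hrecv : ReceiverInvariant f) (c : ℝ) (hc : ∀ r r' : Pref n, ∑ a, f r r' a = c)
    (r r' : Pref n) (b c' : Fin n) (hadj : (r c' : ℕ) = (r b : ℕ) + 1) :
    f r r' b + f r r' c' =
      f r ((Equiv.swap b c').trans r') b + f r ((Equiv.swap b c').trans r') c' := by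
  have hbc : b ≠ c' := by
    intro h; rw [h] at hadj; omega
  set r₁ := (Equiv.swap b c').trans r' with hr₁
  have key : ∀ x : Fin n, x ≠ b → x ≠ c' → f r r' x = f r r₁ x := by
    intro x hxb hxc
    have hswx : Equiv.swap b c' x = x := Equiv.swap_apply_of_ne_of_ne hxb hxc
    have h1 : r' x = r₁ x := by rw [hr₁]; simp [Equiv.trans_apply, hswx]
    have hrxb : (r x : ℕ) ≠ (r b : ℕ) := fun h => hxb (r.injective (Fin.ext h))
    have hrxc : (r x : ℕ) ≠ (r c' : ℕ) := fun h => hxc (r.injective (Fin.ext h))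
    have h2 : mS r r' x = mS r r₁ x := by
      unfold mS
      apply Finset.card_equiv (Equiv.swap b c')
      intro y
      simp only [Finset.mem_filter, Finset.mem_univ, true_and, hr₁, Equiv.trans_apply, hswx]
      have hy : r y < r x ↔ r (Equiv.swap b c' y) < r x := by
        by_cases hyb : y = b
        · subst hyb; rw [Equiv.swap_apply_left]
          simp only [Fin.lt_def]; omega
        · by_cases hyc : y = c'
          · subst hyc; rw [Equiv.swap_apply_right]
            simp only [Fin.lt_def]; omega
          · rw [Equiv.swap_apply_of_ne_of_ne hyb hyc]
      rw [← hy, Equiv.swap_apply_self]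
    exact lemM f hsend hrecv r x r' r₁ h1 h2
  have hpair : ({b, c'} : Finset (Fin n)) ⊆ univ := Finset.subset_univ _
  have hs1 := Finset.sum_sdiff (f := fun x => f r r' x) hpair
  have hs2 := Finset.sum_sdiff (f := fun x => f r r₁ x) hpair
  have hp1 : ∑ x ∈ ({b, c'} : Finset (Fin n)), f r r' x = f r r' b + f r r' c' :=
    Finset.sum_pair hbc
  have hp2 : ∑ x ∈ ({b, c'} : Finset (Fin n)), f r r₁ x = f r r₁ b + f r r₁ c' :=
    Finset.sum_pair hbc
  have hrest : ∑ x ∈ univ \ ({b, c'} : Finset (Fin n)), f r r' x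
      = ∑ x ∈ univ \ ({b, c'} : Finset (Fin n)), f r r₁ x := by
    apply Finset.sum_congr rfl
    intro x hx
    simp only [Finset.mem_sdiff, Finset.mem_univ, Finset.mem_insert, Finset.mem_singleton,
      true_and] at hx
    push_neg at hx
    exact key x hx.1 hx.2
  have hc1 := hc r r'
  have hc2 := hc r r₁
  rw [hp1] at hs1; rw [hp2] at hs2
  rw [hrest] at hs1
  have : f r r' b + f r r' c' = f r r₁ b + f r r₁ c' := by linarith
  exact this

lemma swap_conj {α β : Type*} [DecidableEq α] [DecidableEq β] (e : α ≃ β) (b c x : α) :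
    e ((Equiv.swap b c) x) = (Equiv.swap (e b) (e c)) (e x) := by
  by_cases hxb : x = b
  · subst hxb; rw [Equiv.swap_apply_left, Equiv.swap_apply_left]
  · by_cases hxc : x = c
    · subst hxc; rw [Equiv.swap_apply_right, Equiv.swap_apply_right]
    · rw [Equiv.swap_apply_of_ne_of_ne hxb hxc,
        Equiv.swap_apply_of_ne_of_ne (fun h => hxb (e.injective h)) (fun h => hxc (e.injective h))]

lemma mS_trans {n : ℕ} (r : Pref n) (w : Equiv.Perm (Fin n)) (x : Fin n) :
    mS r (r.trans w) x
      = (univ.filter fun v : Fin n => (v : ℕ) < (r x : ℕ) ∧ (w v : ℕ) < (w (r x) : ℕ)).card := by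
  unfold mS
  apply Finset.card_equiv r
  intro y
  simp only [Finset.mem_filter, Finset.mem_univ, true_and, Equiv.trans_apply, Fin.lt_def]

lemma count_prefix {n : ℕ} (P : Fin n → Prop) [DecidablePred P] (ρ M : ℕ)
    (hM : M ≤ ρ) (hρ : ρ ≤ n)
    (h : ∀ v : Fin n, (v : ℕ) < ρ → (P v ↔ (v : ℕ) < M)) :
    (univ.filter fun v : Fin n => (v : ℕ) < ρ ∧ P v).card = M := by
  have : (univ.filter fun v : Fin n => (v : ℕ) < ρ ∧ P v)
      = (univ.filter fun v : Fin n => (v : ℕ) < M) := by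
    apply Finset.filter_congr
    intro v _
    constructor
    · rintro ⟨h1, h2⟩; exact (h v h1).mp h2
    · intro h1; exact ⟨lt_of_lt_of_le h1 hM, (h v (lt_of_lt_of_le h1 hM)).mpr h1⟩
  rw [this, card_lt_fin n M (le_trans hM hρ)]

lemma count_split {n : ℕ} (P : Fin n → Prop) [DecidablePred P] (ρ : ℕ) (hρ : ρ < n) :
    (univ.filter fun v : Fin n => (v : ℕ) < ρ + 1 ∧ P v).card
      = (univ.filter fun v : Fin n => (v : ℕ) < ρ ∧ P v).card
        + (if P ⟨ρ, hρ⟩ then 1 else 0) := by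
  by_cases hP : P ⟨ρ, hρ⟩
  · rw [if_pos hP]
    have : (univ.filter fun v : Fin n => (v : ℕ) < ρ + 1 ∧ P v)
        = insert ⟨ρ, hρ⟩ (univ.filter fun v : Fin n => (v : ℕ) < ρ ∧ P v) := by
      ext v
      simp only [Finset.mem_filter, Finset.mem_univ, true_and, Finset.mem_insert]
      constructor
      · rintro ⟨h1, h2⟩
        rcases Nat.lt_succ_iff_lt_or_eq.mp h1 with h | h
        · exact Or.inr ⟨h, h2⟩
        · exact Or.inl (Fin.ext h)
      · rintro (rfl | ⟨h1, h2⟩)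
        · exact ⟨by simp, hP⟩
        · exact ⟨by omega, h2⟩
    rw [this, Finset.card_insert_of_notMem (by simp)]
  · have heq : (univ.filter fun v : Fin n => (v : ℕ) < ρ + 1 ∧ P v)
        = (univ.filter fun v : Fin n => (v : ℕ) < ρ ∧ P v) := by
      apply Finset.filter_congr
      intro v _
      constructor
      · rintro ⟨h1, h2⟩
        rcases Nat.lt_succ_iff_lt_or_eq.mp h1 with h | h
        · exact ⟨h, h2⟩
        · exact absurd h2 (by rw [show v = (⟨ρ, hρ⟩ : Fin n) from Fin.ext h]; exact hP)
      · rintro ⟨h1, h2⟩; exact ⟨by omega, h2⟩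
    rw [if_neg hP, heq]
    omega

lemma mS_count0 {n : ℕ} (r : Pref n) (w : Equiv.Perm (Fin n)) (x : Fin n) (ρ M : ℕ)
    (hx : (r x : ℕ) = ρ + 1) (hM : M ≤ ρ)
    (hpre : ∀ v : Fin n, (v : ℕ) < ρ → ((w v : ℕ) < (w (r x) : ℕ) ↔ (v : ℕ) < M))
    (hlast : ¬ ((w ⟨ρ, by omega⟩ : ℕ) < (w (r x) : ℕ))) :
    mS r (r.trans w) x = M := by
  rw [mS_trans, hx, count_split (fun v => (w v : ℕ) < (w (r x) : ℕ)) ρ (by omega),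
    if_neg hlast, count_prefix _ ρ M hM (by omega) hpre]
  omega

lemma mS_count1 {n : ℕ} (r : Pref n) (w : Equiv.Perm (Fin n)) (x : Fin n) (ρ M : ℕ)
    (hx : (r x : ℕ) = ρ + 1) (hM : M ≤ ρ)
    (hpre : ∀ v : Fin n, (v : ℕ) < ρ → ((w v : ℕ) < (w (r x) : ℕ) ↔ (v : ℕ) < M))
    (hlast : ((w ⟨ρ, by omega⟩ : ℕ) < (w (r x) : ℕ))) :
    mS r (r.trans w) x = M + 1 := by
  rw [mS_trans, hx, count_split (fun v => (w v : ℕ) < (w (r x) : ℕ)) ρ (by omega),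
    if_pos hlast, count_prefix _ ρ M hM (by omega) hpre]

lemma mS_countb {n : ℕ} (r : Pref n) (w : Equiv.Perm (Fin n)) (x : Fin n) (ρ M : ℕ)
    (hx : (r x : ℕ) = ρ) (hM : M ≤ ρ)
    (hpre : ∀ v : Fin n, (v : ℕ) < ρ → ((w v : ℕ) < (w (r x) : ℕ) ↔ (v : ℕ) < M)) :
    mS r (r.trans w) x = M := by
  have hρ : ρ < n := by rw [← hx]; exact (r x).isLt
  rw [mS_trans, hx, count_prefix _ ρ M hM (by omega) hpre]

lemma mS_le_left {n : ℕ} (r g : Pref n) (a : Fin n) : mS r g a ≤ (r a : ℕ) := by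
  unfold mS
  calc (univ.filter fun y => r y < r a ∧ g y < g a).card
      ≤ (univ.filter fun y => r y < r a).card := by
        apply Finset.card_le_card
        intro y hy
        simp only [Finset.mem_filter, Finset.mem_univ, true_and] at hy ⊢
        exact hy.1
    _ = (r a : ℕ) := cardS r (r a)

lemma mS_le_right {n : ℕ} (r g : Pref n) (a : Fin n) : mS r g a ≤ (g a : ℕ) := by
  unfold mS
  calc (univ.filter fun y => r y < r a ∧ g y < g a).card
      ≤ (univ.filter fun y => g y < g a).card := by
        apply Finset.card_le_card
        intro y hy
        simp only [Finset.mem_filter, Finset.mem_univ, true_and] at hy ⊢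
        exact hy.2
    _ = (g a : ℕ) := cardS g (g a)

lemma mS_lower {n : ℕ} (r g : Pref n) (a : Fin n) :
    (r a : ℕ) + (g a : ℕ) ≤ (n - 1) + mS r g a := by
  set A := univ.filter fun y : Fin n => r y < r a with hA
  set B := univ.filter fun y : Fin n => g y < g a with hB
  have hcards : A.card + B.card = (A ∪ B).card + (A ∩ B).card :=
    (Finset.card_union_add_card_inter A B).symm
  have hAB : A ∩ B = univ.filter fun y : Fin n => r y < r a ∧ g y < g a := by
    rw [hA, hB, ← Finset.filter_and]
  have hsub : A ∪ B ⊆ univ.erase a := by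
    intro y hy
    simp only [Finset.mem_union, hA, hB, Finset.mem_filter, Finset.mem_univ, true_and] at hy
    rw [Finset.mem_erase]
    constructor
    · rintro rfl
      rcases hy with h | h
      · exact lt_irrefl _ h
      · exact lt_irrefl _ h
    · exact Finset.mem_univ y
  have hcard_erase : (univ.erase a).card = n - 1 := by
    rw [Finset.card_erase_of_mem (Finset.mem_univ a), Finset.card_univ, Fintype.card_fin]
  have hle : (A ∪ B).card ≤ n - 1 := hcard_erase ▸ Finset.card_le_card hsub
  have hcA : A.card = (r a : ℕ) := cardS r (r a)
  have hcB : B.card = (g a : ℕ) := cardS g (g a)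
  unfold mS
  rw [← hAB]
  omega

/-- STEP: changing the count by one does not change the transfer. -/
lemma lemSTEP {n : ℕ} (f : Pref n → Pref n → Fin n → ℝ) (hsend : SenderInvariant f)
    (hrecv : ReceiverInvariant f) (c : ℝ) (hc : ∀ r r' : Pref n, ∑ a, f r r' a = c)
    (r : Pref n) (a : Fin n) (ra rb : Pref n) (h1 : ra a = rb a)
    (hm : mS r rb a = mS r ra a + 1) :
    f r ra a = f r rb a := by
  set u := (r a : ℕ) with hu
  set t := (ra a : ℕ) with ht
  set m := mS r ra a with hmdef
  have hun : u < n := (r a).isLt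
  have htn : t < n := (ra a).isLt
  have htb : (rb a : ℕ) = t := by rw [ht, h1]
  have hmu : m + 1 ≤ u := by
    have := mS_le_left r rb a; omega
  have hmt : m + 1 ≤ t := by
    have := mS_le_right r rb a; rw [htb] at this; omega
  have hlow : u + t ≤ (n - 1) + m := mS_lower r ra a
  -- t ≤ n - 2
  have htop : t + 1 < n := by
    by_contra hcon
    have htn1 : t = n - 1 := by omega
    have key : ∀ g : Pref n, (g a : ℕ) = t → mS r g a = u := by
      intro g hg
      unfold mS
      have : (univ.filter fun y : Fin n => r y < r a ∧ g y < g a)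
          = univ.filter fun y : Fin n => r y < r a := by
        apply Finset.filter_congr
        intro y _
        constructor
        · rintro ⟨hy, _⟩; exact hy
        · intro hy
          refine ⟨hy, ?_⟩
          have hya : y ≠ a := by rintro rfl; exact lt_irrefl _ hy
          have : g y ≠ g a := fun h => hya (g.injective h)
          rw [Fin.lt_def]
          have := (g y).isLt
          omega
      rw [this, cardS r (r a)]
    have k1 := key ra rfl
    have k2 := key rb htb
    omega
  set ρ := u - 1 with hρdef
  have hρ1 : ρ + 1 = u := by omega
  have hρn' : ρ < n := by omega
  -- the three permutations
  obtain ⟨w₁, hw₁⟩ := exists_wperm (n := n) (ρ := ρ) (β := t) (γ := t + 1) (m := m)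
    (by omega) (by omega) (by omega) (by omega) (by omega)
  obtain ⟨w₂, hw₂⟩ := exists_wperm (n := n) (ρ := ρ) (β := 0) (γ := t + 1) (m := m)
    (by omega) (by omega) (by omega) (by omega) (by omega)
  obtain ⟨w₃, hw₃⟩ := exists_wperm (n := n) (ρ := ρ) (β := 0) (γ := t) (m := m)
    (by omega) (by omega) (by omega) (by omega) (by omega)
  set pρ : Fin n := ⟨ρ, hρn'⟩ with hpρ
  set pu : Fin n := r a with hpu
  have hpuv : (pu : ℕ) = ρ + 1 := by rw [hpu, ← hu]; omega
  set bF : Fin n := r.symm pρ with hbF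
  have hrbF : r bF = pρ := r.apply_symm_apply pρ
  have hrbFv : (r bF : ℕ) = ρ := by rw [hrbF]
  have hadj : (r a : ℕ) = (r bF : ℕ) + 1 := by rw [hrbFv]; omega
  set sw : Equiv.Perm (Fin n) := Equiv.swap pρ pu with hsw
  have hpρu : pρ ≠ pu := by
    intro h
    have := congrArg Fin.val h
    simp only [hpρ] at this
    omega
  have hswρ : sw pρ = pu := Equiv.swap_apply_left _ _
  have hswu : sw pu = pρ := Equiv.swap_apply_right _ _
  have hswfix : ∀ v : Fin n, (v : ℕ) < ρ → sw v = v := by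
    intro v hv
    apply Equiv.swap_apply_of_ne_of_ne
    · intro h; rw [h] at hv; simp only [hpρ] at hv; omega
    · intro h; rw [h] at hv; omega
  have hbFa : bF ≠ a := by
    intro h
    rw [h] at hrbFv
    omega
  -- r̄ᵢ = r.trans (sw.trans wᵢ)
  have hbar : ∀ w : Equiv.Perm (Fin n),
      (Equiv.swap bF a).trans (r.trans w) = r.trans (sw.trans w) := by
    intro w
    apply Equiv.ext
    intro y
    simp only [Equiv.trans_apply]
    congr 1
    rw [swap_conj r bF a y, hrbF, hsw, hpu]
  -- point values
  have hq1ρ : (w₁ (r bF) : ℕ) = t := by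
    rw [hrbF, hw₁]
    exact wf_rho (n := n) (by omega) (by omega) (by omega) (by omega) (by omega)
  have hq1u : (w₁ (r a) : ℕ) = t + 1 := by
    rw [hw₁, show ((r a : Fin n) : ℕ) = ρ + 1 from by omega]
    exact wf_rho1 (n := n) (by omega) (by omega) (by omega) (by omega) (by omega)
  have hq2ρ : (w₂ (r bF) : ℕ) = 0 := by
    rw [hrbF, hw₂]
    exact wf_rho (n := n) (by omega) (by omega) (by omega) (by omega) (by omega)
  have hq2u : (w₂ (r a) : ℕ) = t + 1 := by
    rw [hw₂, show ((r a : Fin n) : ℕ) = ρ + 1 from by omega]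
    exact wf_rho1 (n := n) (by omega) (by omega) (by omega) (by omega) (by omega)
  have hq3ρ : (w₃ (r bF) : ℕ) = 0 := by
    rw [hrbF, hw₃]
    exact wf_rho (n := n) (by omega) (by omega) (by omega) (by omega) (by omega)
  have hq3u : (w₃ (r a) : ℕ) = t := by
    rw [hw₃, show ((r a : Fin n) : ℕ) = ρ + 1 from by omega]
    exact wf_rho1 (n := n) (by omega) (by omega) (by omega) (by omega) (by omega)
  -- bar point values
  have hQ : ∀ w : Equiv.Perm (Fin n), ((sw.trans w) (r bF) : ℕ) = (w (r a) : ℕ)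
      ∧ ((sw.trans w) (r a) : ℕ) = (w (r bF) : ℕ) := by
    intro w
    constructor
    · rw [Equiv.trans_apply, hrbF, hswρ, hpu]
    · rw [Equiv.trans_apply, ← hpu, hswu, hrbF]
  -- counts
  have wfargs1 : True := trivial
  have cA1 : mS r (r.trans w₁) bF = m := by
    apply mS_countb r w₁ bF ρ m hrbFv (by omega)
    intro v hv
    rw [hq1ρ, hw₁]
    exact wf_prefix_beta (n := n) (by omega) (by omega) (by omega) (by omega) (by omega)
      (by omega) v hv
  have cB1 : mS r (r.trans w₁) a = m + 1 := by
    refine mS_count1 r w₁ a ρ m (by rw [← hu]; omega) (by omega) ?_ ?_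
    · intro v hv
      rw [hq1u, hw₁]
      exact wf_prefix_gamma (n := n) (by omega) (by omega) (by omega) (by omega) (by omega) v hv
    · show ((w₁ pρ : ℕ) < (w₁ (r a) : ℕ))
      rw [hq1u, ← hrbF, hq1ρ]
      omega
  have cC1 : mS r (r.trans (sw.trans w₁)) bF = m := by
    apply mS_countb r (sw.trans w₁) bF ρ m hrbFv (by omega)
    intro v hv
    rw [(hQ w₁).1, hq1u, Equiv.trans_apply, hswfix v hv, hw₁]
    exact wf_prefix_gamma (n := n) (by omega) (by omega) (by omega) (by omega) (by omega) v hv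
  have cD1 : mS r (r.trans (sw.trans w₁)) a = m := by
    refine mS_count0 r (sw.trans w₁) a ρ m (by rw [← hu]; omega) (by omega) ?_ ?_
    · intro v hv
      rw [(hQ w₁).2, hq1ρ, Equiv.trans_apply, hswfix v hv, hw₁]
      exact wf_prefix_beta (n := n) (by omega) (by omega) (by omega) (by omega) (by omega)
        (by omega) v hv
    · show ¬ (((sw.trans w₁) pρ : ℕ) < ((sw.trans w₁) (r a) : ℕ))
      rw [(hQ w₁).2, hq1ρ, Equiv.trans_apply, hswρ, hpu, hq1u]
      omega
  have cA2 : mS r (r.trans w₂) bF = 0 := by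
    apply mS_countb r w₂ bF ρ 0 hrbFv (by omega)
    intro v hv
    rw [hq2ρ]
    omega
  have cB2 : mS r (r.trans w₂) a = m + 1 := by
    refine mS_count1 r w₂ a ρ m (by rw [← hu]; omega) (by omega) ?_ ?_
    · intro v hv
      rw [hq2u, hw₂]
      exact wf_prefix_gamma (n := n) (by omega) (by omega) (by omega) (by omega) (by omega) v hv
    · show ((w₂ pρ : ℕ) < (w₂ (r a) : ℕ))
      rw [hq2u, ← hrbF, hq2ρ]
      omega
  have cC2 : mS r (r.trans (sw.trans w₂)) bF = m := by
    apply mS_countb r (sw.trans w₂) bF ρ m hrbFv (by omega)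
    intro v hv
    rw [(hQ w₂).1, hq2u, Equiv.trans_apply, hswfix v hv, hw₂]
    exact wf_prefix_gamma (n := n) (by omega) (by omega) (by omega) (by omega) (by omega) v hv
  have cD2 : mS r (r.trans (sw.trans w₂)) a = 0 := by
    refine mS_count0 r (sw.trans w₂) a ρ 0 (by rw [← hu]; omega) (by omega) ?_ ?_
    · intro v hv
      rw [(hQ w₂).2, hq2ρ]
      omega
    · show ¬ (((sw.trans w₂) pρ : ℕ) < ((sw.trans w₂) (r a) : ℕ))
      rw [(hQ w₂).2, hq2ρ]
      omega
  have cA3 : mS r (r.trans w₃) bF = 0 := by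
    apply mS_countb r w₃ bF ρ 0 hrbFv (by omega)
    intro v hv
    rw [hq3ρ]
    omega
  have cB3 : mS r (r.trans w₃) a = m + 1 := by
    refine mS_count1 r w₃ a ρ m (by rw [← hu]; omega) (by omega) ?_ ?_
    · intro v hv
      rw [hq3u, hw₃]
      exact wf_prefix_gamma (n := n) (by omega) (by omega) (by omega) (by omega) (by omega) v hv
    · show ((w₃ pρ : ℕ) < (w₃ (r a) : ℕ))
      rw [hq3u, ← hrbF, hq3ρ]
      omega
  have cC3 : mS r (r.trans (sw.trans w₃)) bF = m := by
    apply mS_countb r (sw.trans w₃) bF ρ m hrbFv (by omega)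
    intro v hv
    rw [(hQ w₃).1, hq3u, Equiv.trans_apply, hswfix v hv, hw₃]
    exact wf_prefix_gamma (n := n) (by omega) (by omega) (by omega) (by omega) (by omega) v hv
  have cD3 : mS r (r.trans (sw.trans w₃)) a = 0 := by
    refine mS_count0 r (sw.trans w₃) a ρ 0 (by rw [← hu]; omega) (by omega) ?_ ?_
    · intro v hv
      rw [(hQ w₃).2, hq3ρ]
      omega
    · show ¬ (((sw.trans w₃) pρ : ℕ) < ((sw.trans w₃) (r a) : ℕ))
      rw [(hQ w₃).2, hq3ρ]
      omega
  -- the three sum equations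
  have SW1 := lemSW f hsend hrecv c hc r (r.trans w₁) bF a hadj
  have SW2 := lemSW f hsend hrecv c hc r (r.trans w₂) bF a hadj
  have SW3 := lemSW f hsend hrecv c hc r (r.trans w₃) bF a hadj
  rw [hbar w₁] at SW1
  rw [hbar w₂] at SW2
  rw [hbar w₃] at SW3
  -- identifications via lemM
  have idA1C3 : f r (r.trans w₁) bF = f r (r.trans (sw.trans w₃)) bF := by
    apply lemM f hsend hrecv r bF _ _ ?_ (cA1.trans cC3.symm)
    apply Fin.ext
    show ((w₁ (r bF) : ℕ)) = (((sw.trans w₃) (r bF)) : ℕ)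
    rw [hq1ρ, (hQ w₃).1, hq3u]
  have idB1B2 : f r (r.trans w₁) a = f r (r.trans w₂) a := by
    apply lemM f hsend hrecv r a _ _ ?_ (cB1.trans cB2.symm)
    apply Fin.ext
    show ((w₁ (r a) : ℕ)) = ((w₂ (r a)) : ℕ)
    rw [hq1u, hq2u]
  have idC1C2 : f r (r.trans (sw.trans w₁)) bF = f r (r.trans (sw.trans w₂)) bF := by
    apply lemM f hsend hrecv r bF _ _ ?_ (cC1.trans cC2.symm)
    apply Fin.ext
    show (((sw.trans w₁) (r bF) : ℕ)) = (((sw.trans w₂) (r bF)) : ℕ)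
    rw [(hQ w₁).1, (hQ w₂).1, hq1u, hq2u]
  have idA2A3 : f r (r.trans w₂) bF = f r (r.trans w₃) bF := by
    apply lemM f hsend hrecv r bF _ _ ?_ (cA2.trans cA3.symm)
    apply Fin.ext
    show ((w₂ (r bF) : ℕ)) = ((w₃ (r bF)) : ℕ)
    rw [hq2ρ, hq3ρ]
  have idD2D3 : f r (r.trans (sw.trans w₂)) a = f r (r.trans (sw.trans w₃)) a := by
    apply lemM f hsend hrecv r a _ _ ?_ (cD2.trans cD3.symm)
    apply Fin.ext
    show (((sw.trans w₂) (r a) : ℕ)) = (((sw.trans w₃) (r a)) : ℕ)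
    rw [(hQ w₂).2, (hQ w₃).2, hq2ρ, hq3ρ]
  have idra : f r ra a = f r (r.trans (sw.trans w₁)) a := by
    apply lemM f hsend hrecv r a _ _ ?_ (by rw [cD1])
    apply Fin.ext
    show ((ra a : ℕ)) = (((sw.trans w₁) (r a)) : ℕ)
    rw [(hQ w₁).2, hq1ρ, ← ht]
  have idrb : f r rb a = f r (r.trans w₃) a := by
    apply lemM f hsend hrecv r a _ _ ?_ (by rw [cB3, hm])
    apply Fin.ext
    show ((rb a : ℕ)) = ((w₃ (r a)) : ℕ)
    rw [hq3u, htb]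
  rw [idra, idrb]
  linarith

/-- There exists a preference giving `a` rank `t` with prescribed count `k`. -/
lemma exists_pref {n : ℕ} (r : Pref n) (a : Fin n) (t k : ℕ) (htn : t < n)
    (hk1 : k + 1 ≤ (r a : ℕ)) (hk2 : k + 1 ≤ t)
    (hlow : (r a : ℕ) + t ≤ (n - 1) + k) :
    ∃ g : Pref n, (g a : ℕ) = t ∧ mS r g a = k := by
  set u := (r a : ℕ) with hu
  have hun : u < n := (r a).isLt
  set ρ := u - 1 with hρdef
  have hρn' : ρ < n := by omega
  obtain ⟨w, hw⟩ := exists_wperm (n := n) (ρ := ρ) (β := t) (γ := t + 1) (m := k)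
    (by omega) (by omega) (by omega) (by omega) (by omega)
  set pρ : Fin n := ⟨ρ, hρn'⟩ with hpρ
  set pu : Fin n := r a with hpu
  set sw : Equiv.Perm (Fin n) := Equiv.swap pρ pu with hsw
  have hswρ : sw pρ = pu := Equiv.swap_apply_left _ _
  have hswu : sw pu = pρ := Equiv.swap_apply_right _ _
  have hswfix : ∀ v : Fin n, (v : ℕ) < ρ → sw v = v := by
    intro v hv
    apply Equiv.swap_apply_of_ne_of_ne
    · intro h; rw [h] at hv; simp only [hpρ] at hv; omega
    · intro h; rw [h] at hv; omega
  have hqρ : (w pρ : ℕ) = t := by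
    rw [hw]
    exact wf_rho (n := n) (by omega) (by omega) (by omega) (by omega) (by omega)
  have hqu : (w pu : ℕ) = t + 1 := by
    rw [hw, show ((pu : Fin n) : ℕ) = ρ + 1 from by rw [hpu, ← hu]; omega]
    exact wf_rho1 (n := n) (by omega) (by omega) (by omega) (by omega) (by omega)
  refine ⟨r.trans (sw.trans w), ?_, ?_⟩
  · show (((sw.trans w) (r a)) : ℕ) = t
    rw [Equiv.trans_apply, ← hpu, hswu, hqρ]
  · refine mS_count0 r (sw.trans w) a ρ k (by rw [← hu]; omega) (by omega) ?_ ?_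
    · intro v hv
      have hval : ((sw.trans w) (r a) : ℕ) = t := by
        rw [Equiv.trans_apply, ← hpu, hswu, hqρ]
      rw [hval, Equiv.trans_apply, hswfix v hv, hw]
      exact wf_prefix_beta (n := n) (by omega) (by omega) (by omega) (by omega) (by omega)
        (by omega) v hv
    · show ¬ (((sw.trans w) pρ : ℕ) < ((sw.trans w) (r a) : ℕ))
      have hval : ((sw.trans w) (r a) : ℕ) = t := by
        rw [Equiv.trans_apply, ← hpu, hswu, hqρ]
      rw [hval, Equiv.trans_apply, hswρ, hqu]
      omega


theorem transfer_depends_only_on_rank (n : ℕ) (hn : 3 ≤ n)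
    (f : Pref n → Pref n → Fin n → ℝ) (hf : TransferBounded f)
    (hneutral : NeutralTransfer f) (hsend : SenderInvariant f)
    (hrecv : ReceiverInvariant f) (c : ℝ) (hc : ∀ r r' : Pref n, ∑ a, f r r' a = c) :
    ∀ (a : Fin n) (r r' r'' : Pref n), r' a = r'' a → f r r' a = f r r'' a := by
  intro a r r' r'' hrank
  suffices key : ∀ g1 g2 : Pref n, g1 a = g2 a → mS r g1 a ≤ mS r g2 a →
      f r g1 a = f r g2 a by
    rcases le_total (mS r r' a) (mS r r'' a) with h | h
    · exact key r' r'' hrank h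
    · exact (key r'' r' hrank.symm h).symm
  suffices H : ∀ d (g1 g2 : Pref n), g1 a = g2 a → mS r g2 a = mS r g1 a + d →
      f r g1 a = f r g2 a by
    intro g1 g2 h hle
    exact H (mS r g2 a - mS r g1 a) g1 g2 h (by omega)
  intro d
  induction d with
  | zero =>
    intro g1 g2 h h2
    exact lemM f hsend hrecv r a g1 g2 h (by omega)
  | succ d IH =>
    intro g1 g2 h h2
    have b1 := mS_le_left r g2 a
    have b2 := mS_le_right r g2 a
    have b3 := mS_lower r g1 a
    have hg12 : (g2 a : ℕ) = (g1 a : ℕ) := by rw [h]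
    obtain ⟨gc, hgc1, hgc2⟩ := exists_pref r a ((g1 a : ℕ)) (mS r g1 a + d)
      (g1 a).isLt (by omega) (by omega) (by omega)
    have e1 : f r g1 a = f r gc a := IH g1 gc (Fin.ext hgc1.symm) hgc2
    have e2 : f r gc a = f r g2 a := by
      apply lemSTEP f hsend hrecv c hc r a gc g2
      · exact Fin.ext (by rw [hgc1, hg12])
      · omega
    rw [e1, e2]
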